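/- Fix n ≥ 2 and complex numbers q_{ij} (1 ≤ i, j ≤ n) with q_{ii} = 1, q_{ji} = q_{ij}^{-1} and |q_{ij}| = 1, and let S = (S_1, …, S_n) be the tuple on the q-commuting Fock space Γ_q(ℂⁿ), S_i = P_{Γ_q(ℂⁿ)} V_i |_{Γ_q(ℂⁿ)}, with vacuum vector ω. Set G_i = S_i + S_i^*. Then ⟨ω, G_2 G_2 G_1 G_1 ω⟩ = 1 while ⟨ω, G_2 G_1 G_1 G_2 ω⟩ = 1/2; in particular the vacuum expectation X ↦ ⟨ω, X ω⟩ is not a tracial state on the von Neumann algebra generated by G_1, …, G_n. -/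

import Mathlib

open scoped BigOperators

/-- `q^σ(x) = ∏ q_{x_{σ⁻¹(k)} x_{σ⁻¹(i)}}`, the product over all pairs `i < k`
with `σ⁻¹(i) > σ⁻¹(k)`. -/
noncomputable def qSigma {n : ℕ} (q : Fin n → Fin n → ℂ) {m : ℕ} (x : Fin m → Fin n)
    (σ : Equiv.Perm (Fin m)) : ℂ :=
  ∏ p ∈ Finset.univ.filter (fun p : Fin m × Fin m => p.1 < p.2 ∧ σ⁻¹ p.2 < σ⁻¹ p.1),
    q (x (σ⁻¹ p.2)) (x (σ⁻¹ p.1))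

/-- The full Fock space over `ℂⁿ`, realized as `ℓ²(Λ̃)`. -/
noncomputable abbrev FockSpace (n : ℕ) := lp (fun _ : List (Fin n) => ℂ) 2

lemma perm_fin_one (σ : Equiv.Perm (Fin 1)) : σ = 1 := by
  revert σ; decide

lemma perm_fin_two (σ : Equiv.Perm (Fin 2)) : σ = 1 ∨ σ = Equiv.swap 0 1 := by
  revert σ; decide

lemma qSigma_one {n m : ℕ} (q : Fin n → Fin n → ℂ) (α : Fin m → Fin n) :
    qSigma q α 1 = 1 := by
  unfold qSigma
  rw [Finset.filter_false_of_mem, Finset.prod_empty]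
  intro p _
  simp only [inv_one, Equiv.Perm.coe_one, id_eq, not_and]
  exact fun h => lt_asymm h

lemma qSigma_swap {n : ℕ} (q : Fin n → Fin n → ℂ) (α : Fin 2 → Fin n) :
    qSigma q α (Equiv.swap 0 1) = q (α 0) (α 1) := by
  unfold qSigma
  rw [show Finset.univ.filter
      (fun p : Fin 2 × Fin 2 => p.1 < p.2 ∧ (Equiv.swap 0 1)⁻¹ p.2 < (Equiv.swap 0 1)⁻¹ p.1)
      = {((0 : Fin 2), (1 : Fin 2))} from by decide]
  rw [Finset.prod_singleton]
  simp [Equiv.swap_apply_left, Equiv.swap_apply_right]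

/-- evaluation at a point, as a continuous linear map on `ℓ²`. -/
noncomputable def evalCLM {n : ℕ} (β : List (Fin n)) : FockSpace n →L[ℂ] ℂ :=
  LinearMap.mkContinuous
    { toFun := fun f => f β
      map_add' := fun f g => rfl
      map_smul' := fun c f => rfl } 1
    (fun f => by
      show ‖f β‖ ≤ 1 * ‖f‖; simpa using lp.norm_apply_le_norm (by norm_num) f β)

lemma evalCLM_apply {n : ℕ} (β : List (Fin n)) (f : FockSpace n) : evalCLM β f = f β := rfl

lemma hasSum_V {n : ℕ} (V : Fin n → FockSpace n →L[ℂ] FockSpace n)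
    (hV : ∀ (i : Fin n) (α : List (Fin n)),
      V i (lp.single 2 α (1 : ℂ)) = lp.single 2 (i :: α) (1 : ℂ))
    (i : Fin n) (x : FockSpace n) (β : List (Fin n)) :
    HasSum (fun α : List (Fin n) => if β = i :: α then x α else 0) ((V i x) β) := by
  have h1 : HasSum (fun α : List (Fin n) => lp.single 2 α (x α)) x :=
    lp.hasSum_single (by norm_num) x
  have h2 : HasSum (fun α : List (Fin n) => evalCLM β (V i (lp.single 2 α (x α))))
      (evalCLM β (V i x)) := ((evalCLM β).comp (V i)).hasSum h1
  have h3 : ∀ α : List (Fin n), evalCLM β (V i (lp.single 2 α (x α)))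
      = if β = i :: α then x α else 0 := by
    intro α
    have hxx : lp.single 2 α (x α) = x α • (lp.single 2 α (1 : ℂ) : FockSpace n) := by
      ext j
      rw [lp.coeFn_smul, Pi.smul_apply, lp.single_apply, lp.single_apply, Pi.single_apply,
        Pi.single_apply]
      split <;> simp
    rw [hxx, map_smul, map_smul, hV, evalCLM_apply, lp.single_apply, Pi.single_apply]
    split_ifs with h
    · subst h; simp
    · simp
  rw [funext h3] at h2
  exact h2

lemma V_apply_cons {n : ℕ} (V : Fin n → FockSpace n →L[ℂ] FockSpace n)
    (hV : ∀ (i : Fin n) (α : List (Fin n)),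
      V i (lp.single 2 α (1 : ℂ)) = lp.single 2 (i :: α) (1 : ℂ))
    (i : Fin n) (x : FockSpace n) (γ : List (Fin n)) :
    (V i x) (i :: γ) = x γ := by
  refine (hasSum_V V hV i x (i :: γ)).unique ?_
  have hfun : ∀ α : List (Fin n), (if (i :: γ : List (Fin n)) = i :: α then x α else 0)
      = if α = γ then x γ else 0 := by
    intro α
    by_cases h : α = γ
    · subst h; simp
    · rw [if_neg (fun hc => h (by simpa using hc.symm)), if_neg h]
  rw [funext hfun]
  exact hasSum_ite_eq γ (x γ)

lemma V_apply_ne {n : ℕ} (V : Fin n → FockSpace n →L[ℂ] FockSpace n)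
    (hV : ∀ (i : Fin n) (α : List (Fin n)),
      V i (lp.single 2 α (1 : ℂ)) = lp.single 2 (i :: α) (1 : ℂ))
    (i : Fin n) (x : FockSpace n) (β : List (Fin n))
    (hβ : ∀ γ, β ≠ i :: γ) : (V i x) β = 0 := by
  refine (hasSum_V V hV i x β).unique ?_
  have hfun : (fun α : List (Fin n) => if β = i :: α then x α else 0) = fun _ => 0 := by
    funext α; exact if_neg (hβ α)
  rw [hfun]
  exact hasSum_zero

set_option maxHeartbeats 6400000 in
/-- With `G_i = S_i + S_i^*` on the `q`-commuting Fock space, the vacuum expectation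
satisfies `ε(G₂G₂G₁G₁) = 1` but `ε(G₂G₁G₁G₂) = 1/2`; in particular the vacuum expectation
is not tracial. -/
theorem stmt18 {n : ℕ} (hn : 2 ≤ n) (q : Fin n → Fin n → ℂ)
    (hq1 : ∀ i, q i i = 1) (hq2 : ∀ i j, q j i = (q i j)⁻¹) (hq3 : ∀ i j, ‖q i j‖ = 1)
    (V : Fin n → FockSpace n →L[ℂ] FockSpace n)
    (hV : ∀ (i : Fin n) (α : List (Fin n)),
      V i (lp.single 2 α (1 : ℂ)) = lp.single 2 (i :: α) (1 : ℂ))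
    (Γq : Submodule ℂ (FockSpace n)) [CompleteSpace ↥Γq]
    (hΓ : (Γq : Set (FockSpace n))
      = {x : FockSpace n | ∀ (m : ℕ) (α : Fin m → Fin n) (σ : Equiv.Perm (Fin m)),
          x (List.ofFn fun i => α (σ⁻¹ i)) = qSigma q α σ * x (List.ofFn α)})
    (Q : FockSpace n →L[ℂ] FockSpace n)
    (hQmem : ∀ x, Q x ∈ Γq) (hQfix : ∀ x ∈ Γq, Q x = x)
    (hQorth : ∀ x : FockSpace n, ∀ y ∈ Γq, (inner ℂ (x - Q x) y : ℂ) = 0)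
    (hω : lp.single 2 ([] : List (Fin n)) (1 : ℂ) ∈ Γq) :
    letI S : Fin n → ↥Γq →L[ℂ] ↥Γq := fun i =>
      (Q.codRestrict Γq hQmem).comp ((V i).comp Γq.subtypeL)
    letI G : Fin n → ↥Γq →L[ℂ] ↥Γq := fun i => S i + ContinuousLinearMap.adjoint (S i)
    letI ω : ↥Γq := ⟨lp.single 2 ([] : List (Fin n)) (1 : ℂ), hω⟩
    letI i1 : Fin n := ⟨0, by omega⟩
    letI i2 : Fin n := ⟨1, by omega⟩
    (inner ℂ ω ((G i2 * G i2 * G i1 * G i1) ω) : ℂ) = 1 ∧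
    (inner ℂ ω ((G i2 * G i1 * G i1 * G i2) ω) : ℂ) = 1 / 2 ∧
    -- in particular, the vacuum expectation is not tracial:
    (inner ℂ ω ((G i2 * (G i2 * G i1 * G i1)) ω) : ℂ)
      ≠ (inner ℂ ω (((G i2 * G i1 * G i1) * G i2) ω) : ℂ) := by
  let S : Fin n → ↥Γq →L[ℂ] ↥Γq := fun i =>
    (Q.codRestrict Γq hQmem).comp ((V i).comp Γq.subtypeL)
  let G : Fin n → ↥Γq →L[ℂ] ↥Γq := fun i => S i + ContinuousLinearMap.adjoint (S i)
  let ω : ↥Γq := ⟨lp.single 2 ([] : List (Fin n)) (1 : ℂ), hω⟩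
  let i1 : Fin n := ⟨0, by omega⟩
  let i2 : Fin n := ⟨1, by omega⟩
  -- basic facts
  have hi12 : i1 ≠ i2 := by
    intro h
    have h' := congrArg Fin.val h
    have h0 : (i1 : Fin n).val = 0 := rfl
    have h1 : (i2 : Fin n).val = 1 := rfl
    rw [h0, h1] at h'
    exact one_ne_zero h'.symm
  have hωcoe : ((ω : ↥Γq) : FockSpace n) = lp.single 2 ([] : List (Fin n)) (1 : ℂ) := rfl
  have hof : ∀ β : Fin 2 → Fin n, List.ofFn β = [β 0, β 1] := by
    intro β; simp [List.ofFn_succ]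
  have hlist : ∀ a b c d : Fin n, ([a, b] : List (Fin n)) = [c, d] ↔ a = c ∧ b = d := by
    simp
  have hmem : ∀ x : FockSpace n, (∀ (m : ℕ) (α : Fin m → Fin n) (σ : Equiv.Perm (Fin m)),
      x (List.ofFn fun i => α (σ⁻¹ i)) = qSigma q α σ * x (List.ofFn α)) → x ∈ Γq := by
    intro x hx
    rw [← SetLike.mem_coe, hΓ]; exact hx
  -- membership of basis-type vectors in Γq
  have M1 : ∀ j : Fin n, lp.single 2 [j] (1 : ℂ) ∈ Γq := by
    intro j
    apply hmem; intro m α σ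
    by_cases hm : m = 1
    · subst hm
      rw [perm_fin_one σ]
      simp only [inv_one, Equiv.Perm.coe_one, id_eq, qSigma_one, one_mul]
    · have hlen : ∀ β : Fin m → Fin n, List.ofFn β ≠ [j] := by
        intro β hc
        exact hm (by simpa using congrArg List.length hc)
      rw [lp.single_apply_ne _ _ _ (hlen _), lp.single_apply_ne _ _ _ (hlen _), mul_zero]
  have M2 : ∀ j : Fin n, lp.single 2 [j, j] (1 : ℂ) ∈ Γq := by
    intro j
    apply hmem; intro m α σ
    by_cases hm : m = 2
    · subst hm
      rcases perm_fin_two σ with rfl | rfl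
      · simp only [inv_one, Equiv.Perm.coe_one, id_eq, qSigma_one, one_mul]
      · rw [qSigma_swap, hof, hof]
        simp only [Equiv.swap_inv, Equiv.swap_apply_left, Equiv.swap_apply_right]
        by_cases h0 : α 0 = j <;> by_cases h1 : α 1 = j
        · rw [h0, h1, hq1, one_mul]
        · rw [lp.single_apply_ne _ _ _ (by simp [h1]), lp.single_apply_ne _ _ _ (by simp [h1]),
            mul_zero]
        · rw [lp.single_apply_ne _ _ _ (by simp [h0]), lp.single_apply_ne _ _ _ (by simp [h0]),
            mul_zero]
        · rw [lp.single_apply_ne _ _ _ (by simp [h0]), lp.single_apply_ne _ _ _ (by simp [h0]),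
            mul_zero]
    · have hlen : ∀ β : Fin m → Fin n, List.ofFn β ≠ [j, j] := by
        intro β hc
        exact hm (by simpa using congrArg List.length hc)
      rw [lp.single_apply_ne _ _ _ (hlen _), lp.single_apply_ne _ _ _ (hlen _), mul_zero]
  have hq12ne : q i1 i2 ≠ 0 := by
    intro hc
    have := hq3 i1 i2
    rw [hc] at this
    simpa using this
  have hcq : (starRingEnd ℂ) (q i1 i2) * q i1 i2 = 1 := by
    have hns : Complex.normSq (q i1 i2) = 1 := by
      rw [Complex.normSq_eq_norm_sq, hq3]; norm_num
    rw [mul_comm, Complex.mul_conj, hns]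
    norm_num
  have hvadd : ∀ (L L' : List (Fin n)) (a b : ℂ) (β : List (Fin n)),
      ((lp.single 2 L a + lp.single 2 L' b : FockSpace n)) β
        = (lp.single 2 L a : FockSpace n) β + (lp.single 2 L' b : FockSpace n) β := by
    intro L L' a b β
    rw [lp.coeFn_add]; rfl
  have Mf : (lp.single 2 [i1, i2] (1 : ℂ) + lp.single 2 [i2, i1] (q i1 i2) : FockSpace n)
      ∈ Γq := by
    apply hmem; intro m α σ
    by_cases hm : m = 2
    · subst hm
      rcases perm_fin_two σ with rfl | rfl
      · simp only [inv_one, Equiv.Perm.coe_one, id_eq, qSigma_one, one_mul]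
      · rw [qSigma_swap, hof, hof]
        simp only [Equiv.swap_inv, Equiv.swap_apply_left, Equiv.swap_apply_right]
        rw [hvadd, hvadd]
        by_cases hA : α 0 = i1 ∧ α 1 = i2
        · obtain ⟨h0, h1⟩ := hA
          rw [h0, h1]
          rw [lp.single_apply_ne _ _ _ (by simp [hi12]), lp.single_apply_self,
            lp.single_apply_self, lp.single_apply_ne _ _ _ (by simp [Ne.symm hi12])]
          ring
        · by_cases hB : α 0 = i2 ∧ α 1 = i1
          · obtain ⟨h0, h1⟩ := hB
            rw [h0, h1]
            rw [lp.single_apply_self, lp.single_apply_ne _ _ _ (by simp [Ne.symm hi12]),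
              lp.single_apply_ne _ _ _ (by simp [hi12]), lp.single_apply_self, hq2]
            field_simp
            ring
          · have n1 : ([α 1, α 0] : List (Fin n)) ≠ [i1, i2] := by
              rw [Ne, hlist]; rintro ⟨ha, hb⟩; exact hB ⟨hb, ha⟩
            have n2 : ([α 1, α 0] : List (Fin n)) ≠ [i2, i1] := by
              rw [Ne, hlist]; rintro ⟨ha, hb⟩; exact hA ⟨hb, ha⟩
            have n3 : ([α 0, α 1] : List (Fin n)) ≠ [i1, i2] := by
              rw [Ne, hlist]; exact hA
            have n4 : ([α 0, α 1] : List (Fin n)) ≠ [i2, i1] := by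
              rw [Ne, hlist]; exact hB
            rw [lp.single_apply_ne _ _ _ n1, lp.single_apply_ne _ _ _ n2,
              lp.single_apply_ne _ _ _ n3, lp.single_apply_ne _ _ _ n4]
            ring
    · have hlen : ∀ (L : List (Fin n)) (β : Fin m → Fin n),
          L.length = 2 → List.ofFn β ≠ L := by
        intro L β hL hc
        apply hm
        have := congrArg List.length hc
        rw [hL] at this
        simpa using this
      rw [hvadd, hvadd, lp.single_apply_ne _ _ _ (hlen [i1, i2] _ rfl),
        lp.single_apply_ne _ _ _ (hlen [i2, i1] _ rfl),
        lp.single_apply_ne _ _ _ (hlen [i1, i2] _ rfl),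
        lp.single_apply_ne _ _ _ (hlen [i2, i1] _ rfl)]
      ring
  -- operator-level helpers
  have hS : ∀ (i : Fin n) (x : ↥Γq), ((S i x : ↥Γq) : FockSpace n) = Q (V i (x : FockSpace n)) :=
    fun i x => rfl
  have hQinner : ∀ w : FockSpace n, w ∈ Γq → ∀ y, (inner ℂ w (Q y) : ℂ) = inner ℂ w y := by
    intro w hw y
    have h0 := hQorth y w hw
    have h1 : (inner ℂ w (y - Q y) : ℂ) = 0 := by
      rw [← inner_conj_symm, h0, map_zero]
    rw [inner_sub_right, sub_eq_zero] at h1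
    exact h1.symm
  have hSinner : ∀ (i : Fin n) (z x : ↥Γq),
      (inner ℂ z (S i x) : ℂ) = inner ℂ (z : FockSpace n) (V i (x : FockSpace n)) := by
    intro i z x
    rw [Submodule.coe_inner, hS]
    exact hQinner _ z.2 _
  have hadj : ∀ (i : Fin n) (w z : ↥Γq),
      (∀ x : ↥Γq, (inner ℂ (w : FockSpace n) (V i (x : FockSpace n)) : ℂ)
        = inner ℂ (z : FockSpace n) (x : FockSpace n)) →
      ContinuousLinearMap.adjoint (S i) w = z := by
    intro i w z h
    refine ext_inner_right ℂ ?_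
    intro x
    rw [ContinuousLinearMap.adjoint_inner_left, hSinner, h, Submodule.coe_inner]
  have hsinl : ∀ (L : List (Fin n)) (a : ℂ) (f : FockSpace n),
      (inner ℂ (lp.single 2 L a : FockSpace n) f : ℂ) = (starRingEnd ℂ) a * f L := by
    intro L a f
    rw [lp.inner_single_left]
    simp [RCLike.inner_apply, mul_comm]
  have hGdef : ∀ (j : Fin n) (x : ↥Γq),
      G j x = S j x + ContinuousLinearMap.adjoint (S j) x := fun j x => rfl
  have hGsa : ∀ j, ContinuousLinearMap.adjoint (G j) = G j := by
    intro j
    show ContinuousLinearMap.adjoint (S j + ContinuousLinearMap.adjoint (S j)) = _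
    rw [map_add, ContinuousLinearMap.adjoint_adjoint, add_comm]
  have hmove : ∀ (j : Fin n) (x y : ↥Γq), (inner ℂ x (G j y) : ℂ) = inner ℂ (G j x) y := by
    intro j x y
    conv_rhs => rw [← hGsa j]
    rw [ContinuousLinearMap.adjoint_inner_left]
  -- G j ω = e_{[j]}
  have hGω : ∀ j : Fin n, ((G j ω : ↥Γq) : FockSpace n) = lp.single 2 [j] (1 : ℂ) := by
    intro j
    have hadj0 : ContinuousLinearMap.adjoint (S j) ω = 0 := by
      apply hadj; intro x
      rw [hωcoe, hsinl, V_apply_ne V hV j _ _ (fun γ h => List.cons_ne_nil _ _ h.symm)]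
      simp
    rw [hGdef, hadj0, add_zero, hS, hωcoe, hV]
    exact hQfix _ (M1 j)
  -- G i1 (G i1 ω) = e_{[i1,i1]} + e_[]
  have hGu1 : ((G i1 (G i1 ω) : ↥Γq) : FockSpace n)
      = lp.single 2 [i1, i1] (1 : ℂ) + lp.single 2 ([] : List (Fin n)) (1 : ℂ) := by
    have hadjω : ContinuousLinearMap.adjoint (S i1) (G i1 ω) = ω := by
      apply hadj; intro x
      rw [hGω i1, hsinl, show ([i1] : List (Fin n)) = i1 :: [] from rfl,
        V_apply_cons V hV i1 _ [], hωcoe, hsinl]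
    rw [hGdef, hadjω, Submodule.coe_add, hS, hGω i1, hV, hωcoe, hQfix _ (M2 i1)]
  -- G i1 (G i2 ω) = (1/2) (e_{[i1,i2]} + q12 e_{[i2,i1]})
  have hgQ : Q (lp.single 2 [i1, i2] (1 : ℂ) - lp.single 2 [i2, i1] (q i1 i2)) = 0 := by
    set g : FockSpace n := lp.single 2 [i1, i2] (1 : ℂ) - lp.single 2 [i2, i1] (q i1 i2) with hg
    have hgorth : ∀ z, z ∈ Γq → (inner ℂ g z : ℂ) = 0 := by
      intro z hz
      have hzprop : ∀ (m : ℕ) (α : Fin m → Fin n) (σ : Equiv.Perm (Fin m)),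
          z (List.ofFn fun i => α (σ⁻¹ i)) = qSigma q α σ * z (List.ofFn α) := by
        rw [← SetLike.mem_coe, hΓ] at hz; exact hz
      have hz21 : z [i2, i1] = q i1 i2 * z [i1, i2] := by
        have h := hzprop 2 ![i1, i2] (Equiv.swap 0 1)
        rw [qSigma_swap, hof, hof] at h
        simpa [Equiv.swap_inv, Equiv.swap_apply_left, Equiv.swap_apply_right] using h
      rw [hg, inner_sub_left, hsinl, hsinl, hz21]
      have : (starRingEnd ℂ) (1 : ℂ) = 1 := by simp
      rw [this, one_mul]
      linear_combination (-(z [i1, i2])) * hcq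
    have h1 : (inner ℂ g (Q g) : ℂ) = 0 := hgorth _ (hQmem g)
    have h2 := hQorth g (Q g) (hQmem g)
    rw [inner_sub_left, h1, zero_sub, neg_eq_zero] at h2
    exact inner_self_eq_zero.mp h2
  have hGu2 : ((G i1 (G i2 ω) : ↥Γq) : FockSpace n)
      = (2⁻¹ : ℂ) • (lp.single 2 [i1, i2] (1 : ℂ) + lp.single 2 [i2, i1] (q i1 i2)) := by
    have hadj0 : ContinuousLinearMap.adjoint (S i1) (G i2 ω) = 0 := by
      apply hadj; intro x
      rw [hGω i2, hsinl, V_apply_ne V hV i1 _ [i2]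
        (fun γ h => hi12 (((List.cons.injEq _ _ _ _).mp h).1.symm))]
      simp
    have hsplit : (lp.single 2 [i1, i2] (1 : ℂ) : FockSpace n)
        = (2⁻¹ : ℂ) • (lp.single 2 [i1, i2] (1 : ℂ) + lp.single 2 [i2, i1] (q i1 i2))
          + (2⁻¹ : ℂ) • (lp.single 2 [i1, i2] (1 : ℂ) - lp.single 2 [i2, i1] (q i1 i2)) := by
      module
    have hQe : Q (lp.single 2 [i1, i2] (1 : ℂ))
        = (2⁻¹ : ℂ) • (lp.single 2 [i1, i2] (1 : ℂ) + lp.single 2 [i2, i1] (q i1 i2)) := by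
      conv_lhs => rw [hsplit]
      rw [map_add, map_smul, map_smul, hgQ, smul_zero, add_zero, hQfix _ Mf]
    rw [hGdef, hadj0, add_zero, hS, hGω i2, hV, hQe]
  -- key values
  have key1 : (inner ℂ ω (G i2 (G i2 (G i1 (G i1 ω)))) : ℂ) = 1 := by
    rw [hmove]
    have hadjv : ContinuousLinearMap.adjoint (S i2) (G i1 (G i1 ω)) = 0 := by
      apply hadj; intro x
      rw [hGu1, inner_add_left, hsinl, hsinl,
        V_apply_ne V hV i2 _ [i1, i1]
          (fun γ h => hi12 (((List.cons.injEq _ _ _ _).mp h).1)),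
        V_apply_ne V hV i2 _ [] (fun γ h => List.cons_ne_nil _ _ h.symm)]
      simp
    rw [hGdef i2 (G i1 (G i1 ω)), hadjv, add_zero, hSinner, hGω i2, hsinl,
      show ([i2] : List (Fin n)) = i2 :: [] from rfl, V_apply_cons V hV i2 _ [], hGu1, hvadd,
      lp.single_apply_ne _ _ _ (by simp), lp.single_apply_self]
    simp
  have key2 : (inner ℂ ω (G i2 (G i1 (G i1 (G i2 ω)))) : ℂ) = 1 / 2 := by
    rw [hmove, hmove, Submodule.coe_inner, hGu2]
    rw [inner_smul_left, inner_smul_right]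
    have hFF : (inner ℂ
        ((lp.single 2 [i1, i2] (1 : ℂ) + lp.single 2 [i2, i1] (q i1 i2)) : FockSpace n)
        ((lp.single 2 [i1, i2] (1 : ℂ) + lp.single 2 [i2, i1] (q i1 i2)) : FockSpace n) : ℂ)
        = 2 := by
      rw [inner_add_left, hsinl, hsinl, hvadd, hvadd,
        lp.single_apply_self, lp.single_apply_self,
        lp.single_apply_ne _ _ _ (by rw [Ne, hlist]; exact fun h => hi12 h.1),
        lp.single_apply_ne _ _ _ (by rw [Ne, hlist]; exact fun h => hi12 h.2)]
      rw [map_one]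
      linear_combination hcq
    rw [hFF]
    norm_num [map_inv₀, Complex.conj_ofNat]
  have key3 : (inner ℂ ω (G i2 (G i2 (G i1 (G i1 ω)))) : ℂ)
      ≠ (inner ℂ ω (G i2 (G i1 (G i1 (G i2 ω)))) : ℂ) := by
    rw [key1, key2]
    norm_num
  refine ⟨?_, ?_, ?_⟩ <;> simp only [ContinuousLinearMap.mul_apply]
  · exact key1
  · exact key2
  · exact key3
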